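/- For a unit vector (r_x, r_y, r_z) ∈ ℝ³, the sum h((1+r_x)/2) + h((1+r_y)/2) + h((1+r_z)/2) ≥ 2, where h is the binary entropy function in bits, and the minimum 2 is attained exactly when (r_x, r_y, r_z) is a signed standard basis vector. -/

import Mathlib

/-- Binary entropy function in bits. -/
noncomputable def binEnt (t : ℝ) : ℝ :=
  -(t * Real.logb 2 t) - (1 - t) * Real.logb 2 (1 - t)

namespace Stmt8Aux

open Real Set

noncomputable def G (x : ℝ) : ℝ :=
  2 * x ^ 2 * Real.log 2 - (1 + x) * Real.log (1 + x) - (1 - x) * Real.log (1 - x)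

noncomputable def G1 (x : ℝ) : ℝ :=
  4 * x * Real.log 2 - Real.log (1 + x) + Real.log (1 - x)

noncomputable def c : ℝ := Real.sqrt (1 - 1 / (2 * Real.log 2))

lemma log2_pos : (0 : ℝ) < Real.log 2 := Real.log_pos one_lt_two

lemma half_lt_log2 : (1 : ℝ) / 2 < Real.log 2 := by
  have := Real.log_two_gt_d9
  linarith

lemma csq_pos : (0 : ℝ) < 1 - 1 / (2 * Real.log 2) := by
  have h := half_lt_log2
  have h2 : (0:ℝ) < 2 * Real.log 2 := by linarith
  rw [sub_pos, div_lt_one h2]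
  linarith

lemma c_sq : c ^ 2 = 1 - 1 / (2 * Real.log 2) := Real.sq_sqrt csq_pos.le

lemma c_pos : 0 < c := Real.sqrt_pos.2 csq_pos

lemma c_lt_one : c < 1 := by
  have h2 : (0:ℝ) < 2 * Real.log 2 := by have := log2_pos; linarith
  have : c ^ 2 < 1 := by
    rw [c_sq]
    have : 0 < 1 / (2 * Real.log 2) := by positivity
    linarith
  nlinarith [c_pos]

lemma contG : Continuous G := by
  have h1 : Continuous fun x : ℝ => (1 + x) * Real.log (1 + x) :=
    Real.continuous_mul_log.comp (continuous_const.add continuous_id)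
  have h2 : Continuous fun x : ℝ => (1 - x) * Real.log (1 - x) :=
    Real.continuous_mul_log.comp (continuous_const.sub continuous_id)
  exact (((continuous_const.mul (continuous_pow 2)).mul continuous_const).sub h1).sub h2

lemma hasDerivAt_G {x : ℝ} (h1 : -1 < x) (h2 : x < 1) : HasDerivAt G (G1 x) x := by
  have ha : (0:ℝ) < 1 + x := by linarith
  have hb : (0:ℝ) < 1 - x := by linarith
  have da : HasDerivAt (fun x : ℝ => 1 + x) 1 x := by
    simpa using (hasDerivAt_id x).const_add 1
  have db : HasDerivAt (fun x : ℝ => 1 - x) (-1) x := by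
    simpa using (hasDerivAt_id x).const_sub 1
  have dla : HasDerivAt (fun x : ℝ => Real.log (1 + x)) (1 / (1 + x)) x := by
    simpa [Function.comp_def] using (Real.hasDerivAt_log ha.ne').comp x da
  have dlb : HasDerivAt (fun x : ℝ => Real.log (1 - x)) (-(1 / (1 - x))) x := by
    have := (Real.hasDerivAt_log hb.ne').comp x db
    simpa [div_eq_mul_inv, mul_comm, Function.comp_def] using this
  have dA : HasDerivAt (fun x : ℝ => (1 + x) * Real.log (1 + x))
      (1 * Real.log (1 + x) + (1 + x) * (1 / (1 + x))) x := da.mul dla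
  have dB : HasDerivAt (fun x : ℝ => (1 - x) * Real.log (1 - x))
      ((-1) * Real.log (1 - x) + (1 - x) * (-(1 / (1 - x)))) x := db.mul dlb
  have dq : HasDerivAt (fun x : ℝ => 2 * x ^ 2 * Real.log 2)
      (2 * (2 * x) * Real.log 2) x := by
    have : HasDerivAt (fun x : ℝ => x ^ 2) (2 * x) x := by
      simpa using hasDerivAt_pow 2 x
    simpa [mul_comm, mul_assoc, mul_left_comm] using (this.const_mul 2).mul_const (Real.log 2)
  have := (dq.sub dA).sub dB
  refine this.congr_deriv ?_
  have hane : (1 + x) ≠ 0 := ha.ne'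
  have hbne : (1 - x) ≠ 0 := hb.ne'
  rw [G1]
  field_simp
  ring

lemma hasDerivAt_G1 {x : ℝ} (h1 : -1 < x) (h2 : x < 1) :
    HasDerivAt G1 (4 * Real.log 2 - 1 / (1 + x) - 1 / (1 - x)) x := by
  have ha : (0:ℝ) < 1 + x := by linarith
  have hb : (0:ℝ) < 1 - x := by linarith
  have da : HasDerivAt (fun x : ℝ => 1 + x) 1 x := by
    simpa using (hasDerivAt_id x).const_add 1
  have db : HasDerivAt (fun x : ℝ => 1 - x) (-1) x := by
    simpa using (hasDerivAt_id x).const_sub 1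
  have dla : HasDerivAt (fun x : ℝ => Real.log (1 + x)) (1 / (1 + x)) x := by
    simpa [Function.comp_def] using (Real.hasDerivAt_log ha.ne').comp x da
  have dlb : HasDerivAt (fun x : ℝ => Real.log (1 - x)) (-(1 / (1 - x))) x := by
    have := (Real.hasDerivAt_log hb.ne').comp x db
    simpa [div_eq_mul_inv, mul_comm, Function.comp_def] using this
  have dl : HasDerivAt (fun x : ℝ => 4 * x * Real.log 2) (4 * Real.log 2) x := by
    simpa [mul_comm, mul_assoc, mul_left_comm] using
      ((hasDerivAt_id x).const_mul 4).mul_const (Real.log 2)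
  have := (dl.sub dla).add dlb
  refine this.congr_deriv ?_
  ring

lemma G1_sign_aux {x : ℝ} (h0 : 0 ≤ x) (h1 : x < 1) :
    1 / (1 + x) + 1 / (1 - x) = 2 / (1 - x ^ 2) := by
  have ha : (1 + x) ≠ 0 := by nlinarith
  have hb : (1 - x) ≠ 0 := by nlinarith
  have : (1 - x ^ 2) = (1 + x) * (1 - x) := by ring
  rw [this]
  field_simp
  ring

lemma deriv_G1_pos {x : ℝ} (hx : x ∈ Ioo (0:ℝ) c) :
    0 < 4 * Real.log 2 - 1 / (1 + x) - 1 / (1 - x) := by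
  obtain ⟨hx0, hxc⟩ := hx
  have hc1 := c_lt_one
  have hx1 : x < 1 := hxc.trans hc1
  have hxsq : x ^ 2 < c ^ 2 := by nlinarith [c_pos]
  have h2 : 1 / (2 * Real.log 2) < 1 - x ^ 2 := by
    rw [c_sq] at hxsq; linarith
  have hpos : (0:ℝ) < 1 - x ^ 2 := lt_trans (by positivity) h2
  have : 2 / (1 - x ^ 2) < 2 / (1 / (2 * Real.log 2)) := by
    apply div_lt_div_of_pos_left (by norm_num) (by positivity) h2
  have h4 : 2 / (1 / (2 * Real.log 2)) = 4 * Real.log 2 := by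
    have := log2_pos
    field_simp
    ring
  have hsum := G1_sign_aux hx0.le hx1
  rw [h4] at this
  linarith

lemma G1_contOn : ContinuousOn G1 (Icc (0:ℝ) c) := by
  intro x hx
  have h1 : -1 < x := by linarith [hx.1]
  have h2 : x < 1 := by linarith [hx.2, c_lt_one]
  exact ((hasDerivAt_G1 h1 h2).differentiableAt.continuousAt).continuousWithinAt

lemma G1_zero : G1 0 = 0 := by simp [G1]

lemma G1_pos {x : ℝ} (hx : x ∈ Ioc (0:ℝ) c) : 0 < G1 x := by
  have hmono : StrictMonoOn G1 (Icc (0:ℝ) c) := by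
    apply strictMonoOn_of_deriv_pos (convex_Icc _ _) G1_contOn
    intro y hy
    rw [interior_Icc] at hy
    have h1 : -1 < y := by linarith [hy.1]
    have h2 : y < 1 := by linarith [hy.2, c_lt_one]
    rw [(hasDerivAt_G1 h1 h2).deriv]
    exact deriv_G1_pos hy
  have := hmono (left_mem_Icc.2 (c_pos.le)) ⟨hx.1.le, hx.2⟩ hx.1
  rwa [G1_zero] at this

lemma G_zero : G 0 = 0 := by simp [G]

lemma G_one : G 1 = 0 := by
  have : (1:ℝ) + 1 = 2 := by norm_num
  simp [G, this]

lemma G_pos_left {x : ℝ} (hx : x ∈ Ioc (0:ℝ) c) : 0 < G x := by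
  have hmono : StrictMonoOn G (Icc (0:ℝ) c) := by
    apply strictMonoOn_of_deriv_pos (convex_Icc _ _) contG.continuousOn
    intro y hy
    rw [interior_Icc] at hy
    have h1 : -1 < y := by linarith [hy.1]
    have h2 : y < 1 := by linarith [hy.2, c_lt_one]
    rw [(hasDerivAt_G h1 h2).deriv]
    exact G1_pos ⟨hy.1, hy.2.le⟩
  have := hmono (left_mem_Icc.2 (c_pos.le)) ⟨hx.1.le, hx.2⟩ hx.1
  rwa [G_zero] at this

lemma G_concave : ConcaveOn ℝ (Icc c 1) G := by
  apply concaveOn_of_hasDerivWithinAt2_nonpos (f' := G1)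
    (f'' := fun x => 4 * Real.log 2 - 1 / (1 + x) - 1 / (1 - x))
    (convex_Icc _ _) contG.continuousOn
  · intro x hx
    rw [interior_Icc] at hx
    have h1 : -1 < x := by linarith [hx.1, c_pos]
    exact (hasDerivAt_G h1 hx.2).hasDerivWithinAt
  · intro x hx
    rw [interior_Icc] at hx
    have h1 : -1 < x := by linarith [hx.1, c_pos]
    exact (hasDerivAt_G1 h1 hx.2).hasDerivWithinAt
  · intro x hx
    rw [interior_Icc] at hx
    obtain ⟨hcx, hx1⟩ := hx
    have hx0 : 0 < x := c_pos.trans hcx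
    have hxsq : c ^ 2 < x ^ 2 := by nlinarith [c_pos]
    have h2 : 1 - x ^ 2 < 1 / (2 * Real.log 2) := by
      rw [c_sq] at hxsq; linarith
    have hpos : (0:ℝ) < 1 - x ^ 2 := by nlinarith
    have key : 4 * Real.log 2 ≤ 2 / (1 - x ^ 2) := by
      rw [le_div_iff₀ hpos]
      have h2l : (0:ℝ) < 2 * Real.log 2 := by have := log2_pos; linarith
      rw [lt_div_iff₀ h2l] at h2
      nlinarith
    have hsum := G1_sign_aux hx0.le hx1
    linarith

lemma G_pos {x : ℝ} (h0 : 0 < x) (h1 : x < 1) : 0 < G x := by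
  rcases le_or_gt x c with h | h
  · exact G_pos_left ⟨h0, h⟩
  · -- concavity on [c,1]
    have hc1 := c_lt_one
    set a : ℝ := (1 - x) / (1 - c) with ha_def
    set b : ℝ := (x - c) / (1 - c) with hb_def
    have hd : (0:ℝ) < 1 - c := by linarith
    have ha : 0 < a := by apply div_pos <;> linarith
    have hb : 0 < b := by apply div_pos <;> linarith
    have hab : a + b = 1 := by
      rw [ha_def, hb_def, ← add_div, show (1 - x) + (x - c) = 1 - c by ring,
        div_self hd.ne']
    have hx_eq : a * c + b * 1 = x := by
      rw [ha_def, hb_def, div_mul_eq_mul_div, div_mul_eq_mul_div, ← add_div,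
        div_eq_iff hd.ne']
      ring
    have hGc : 0 < G c := G_pos_left ⟨c_pos, le_refl c⟩
    have := G_concave.2 (x := c) (y := 1)
      (left_mem_Icc.2 hc1.le) (right_mem_Icc.2 hc1.le) ha.le hb.le hab
    simp only [smul_eq_mul] at this
    rw [hx_eq, G_one] at this
    nlinarith

lemma G_neg_eq (x : ℝ) : G (-x) = G x := by
  simp only [G]
  ring_nf

lemma G_nonneg {x : ℝ} (h0 : 0 ≤ x) (h1 : x ≤ 1) : 0 ≤ G x := by
  rcases eq_or_lt_of_le h0 with h | h
  · rw [← h, G_zero]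
  rcases eq_or_lt_of_le h1 with h' | h'
  · rw [h', G_one]
  · exact (G_pos h h').le

lemma G_eq_zero_iff {x : ℝ} (h0 : 0 ≤ x) (h1 : x ≤ 1) : G x = 0 ↔ x = 0 ∨ x = 1 := by
  constructor
  · intro h
    by_contra hc
    push_neg at hc
    have h0' : 0 < x := lt_of_le_of_ne h0 (Ne.symm hc.1)
    have h1' : x < 1 := lt_of_le_of_ne h1 hc.2
    exact absurd h (G_pos h0' h1').ne'
  · rintro (h | h) <;> subst h
    · exact G_zero
    · exact G_one

/-- Key identity relating `binEnt` and `G` on the open interval. -/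
lemma binEnt_identity {r : ℝ} (h1 : -1 < r) (h2 : r < 1) :
    binEnt ((1 + r) / 2) = (1 - r ^ 2) + G r / (2 * Real.log 2) := by
  have ha : (0:ℝ) < 1 + r := by linarith
  have hb : (0:ℝ) < 1 - r := by linarith
  have hl2 : Real.log 2 ≠ 0 := log2_pos.ne'
  have e1 : Real.log ((1 + r) / 2) = Real.log (1 + r) - Real.log 2 :=
    Real.log_div ha.ne' two_ne_zero
  have e2 : Real.log ((1 - r) / 2) = Real.log (1 - r) - Real.log 2 :=
    Real.log_div hb.ne' two_ne_zero
  have h12 : (1 : ℝ) - (1 + r) / 2 = (1 - r) / 2 := by ring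
  simp only [binEnt, Real.logb, h12, e1, e2, G]
  field_simp
  ring

lemma binEnt_zero : binEnt 0 = 0 := by simp [binEnt]

lemma binEnt_one : binEnt 1 = 0 := by simp [binEnt]

lemma binEnt_half : binEnt (1 / 2) = 1 := by
  have h : Real.logb 2 (1 / 2) = -1 := by
    rw [one_div, Real.logb_inv, Real.logb_self_eq_one] <;> norm_num
  norm_num [binEnt, h]

/-- Per-coordinate bound with equality characterization. -/
lemma coord {r : ℝ} (hr : r ^ 2 ≤ 1) :
    1 - r ^ 2 ≤ binEnt ((1 + r) / 2) ∧
      (binEnt ((1 + r) / 2) = 1 - r ^ 2 ↔ r = 0 ∨ r ^ 2 = 1) := by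
  have hr1 : -1 ≤ r := by nlinarith
  have hr2 : r ≤ 1 := by nlinarith
  rcases eq_or_lt_of_le hr1 with h | h
  · -- r = -1
    have hr' : r = -1 := h.symm
    subst hr'
    norm_num [binEnt_zero]
  rcases eq_or_lt_of_le hr2 with h' | h'
  · subst h'
    norm_num [binEnt_one]
  · -- -1 < r < 1
    have hid := binEnt_identity h h'
    have habs0 : 0 ≤ |r| := abs_nonneg r
    have habs1 : |r| < 1 := abs_lt.2 ⟨h, h'⟩
    have hGr : G r = G |r| := by
      rcases abs_cases r with ⟨he, _⟩ | ⟨he, _⟩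
      · rw [he]
      · rw [he, G_neg_eq]
    have hGnn : 0 ≤ G r := by
      rw [hGr]; exact G_nonneg habs0 habs1.le
    have hl2 : (0:ℝ) < 2 * Real.log 2 := by have := log2_pos; linarith
    constructor
    · rw [hid]
      have : 0 ≤ G r / (2 * Real.log 2) := div_nonneg hGnn hl2.le
      linarith
    · rw [hid]
      constructor
      · intro heq
        have : G r / (2 * Real.log 2) = 0 := by linarith
        have hG0 : G r = 0 := by
          field_simp at this
          simpa using this
        rw [hGr] at hG0
        rcases (G_eq_zero_iff habs0 habs1.le).1 hG0 with h0 | h1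
        · left; exact abs_eq_zero.1 h0
        · exact absurd h1 habs1.ne
      · rintro (h0 | h1)
        · subst h0
          simp [G_zero]
        · nlinarith

lemma sq_one_iff (r : ℝ) : r ^ 2 = 1 ↔ |r| = 1 := by
  rw [abs_eq (by norm_num : (0:ℝ) ≤ 1)]
  constructor
  · intro h
    have : (r - 1) * (r + 1) = 0 := by nlinarith
    rcases mul_eq_zero.1 this with h | h
    · left; linarith
    · right; linarith
  · rintro (h | h) <;> rw [h] <;> ring

end Stmt8Aux

open Stmt8Aux in
theorem stmt_8 (rx ry rz : ℝ) (hunit : rx ^ 2 + ry ^ 2 + rz ^ 2 = 1) :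
    2 ≤ binEnt ((1 + rx) / 2) + binEnt ((1 + ry) / 2) + binEnt ((1 + rz) / 2) ∧
    (binEnt ((1 + rx) / 2) + binEnt ((1 + ry) / 2) + binEnt ((1 + rz) / 2) = 2 ↔
      ((|rx| = 1 ∧ ry = 0 ∧ rz = 0) ∨ (|ry| = 1 ∧ rx = 0 ∧ rz = 0) ∨
        (|rz| = 1 ∧ rx = 0 ∧ ry = 0))) := by
  have hx2 : rx ^ 2 ≤ 1 := by nlinarith [sq_nonneg ry, sq_nonneg rz]
  have hy2 : ry ^ 2 ≤ 1 := by nlinarith [sq_nonneg rx, sq_nonneg rz]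
  have hz2 : rz ^ 2 ≤ 1 := by nlinarith [sq_nonneg rx, sq_nonneg ry]
  obtain ⟨hxle, hxeq⟩ := coord hx2
  obtain ⟨hyle, hyeq⟩ := coord hy2
  obtain ⟨hzle, hzeq⟩ := coord hz2
  constructor
  · linarith
  constructor
  · intro heq
    have ex : binEnt ((1 + rx) / 2) = 1 - rx ^ 2 := by linarith
    have ey : binEnt ((1 + ry) / 2) = 1 - ry ^ 2 := by linarith
    have ez : binEnt ((1 + rz) / 2) = 1 - rz ^ 2 := by linarith
    have cx := hxeq.1 ex
    have cy := hyeq.1 ey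
    have cz := hzeq.1 ez
    rcases cx with cx | cx
    · rcases cy with cy | cy
      · rcases cz with cz | cz
        · exfalso; rw [cx, cy, cz] at hunit; norm_num at hunit
        · right; right
          exact ⟨(sq_one_iff rz).1 cz, cx, cy⟩
      · rcases cz with cz | cz
        · right; left
          exact ⟨(sq_one_iff ry).1 cy, cx, cz⟩
        · exfalso; rw [cx] at hunit; nlinarith
    · rcases cy with cy | cy
      · rcases cz with cz | cz
        · left
          exact ⟨(sq_one_iff rx).1 cx, cy, cz⟩
        · exfalso; nlinarith
      · exfalso; nlinarith
  · rintro (⟨h1, h2, h3⟩ | ⟨h1, h2, h3⟩ | ⟨h1, h2, h3⟩) <;>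
      [(subst h2; subst h3); (subst h2; subst h3); (subst h2; subst h3)]
    · rcases (abs_eq (by norm_num : (0:ℝ) ≤ 1)).1 h1 with h | h <;> subst h <;>
        norm_num [binEnt_zero, binEnt_one, binEnt_half]
    · rcases (abs_eq (by norm_num : (0:ℝ) ≤ 1)).1 h1 with h | h <;> subst h <;>
        norm_num [binEnt_zero, binEnt_one, binEnt_half]
    · rcases (abs_eq (by norm_num : (0:ℝ) ≤ 1)).1 h1 with h | h <;> subst h <;>
        norm_num [binEnt_zero, binEnt_one, binEnt_half]
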